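/- Theorem (Bethe/AMP correspondence). Fix positive integers N, M, P and observations y ∈ ℝ^{M×P}. Suppose Σ ∈ (0,∞)^{N×P}, T ∈ ℝ^{N×P}, Z ∈ (0,∞)^{M×N}, W ∈ ℝ^{M×N}, ω ∈ ℝ^{M×P}, a, c ∈ ℝ^{N×P}, r, s ∈ ℝ^{M×N} with c ≥ 0, s ≥ 0 satisfy the AMP fixed-point equations: (i) a_{il} = f_a(Σ_{il},T_{il}), c_{il} = f_c(Σ_{il},T_{il}), r_{μi} = f_r(Z_{μi},W_{μi}), s_{μi} = f_s(Z_{μi},W_{μi}) for all i,l,μ; (ii) setting V_{μl} := N^{-1} Σ_j (c_{jl} s_{μj} + c_{jl} r_{μj}² + a_{jl}² s_{μj}) and assuming D_{μl} := V_{μl} − N^{-1} Σ_j s_{μj} c_{jl} > 0, we have g_out(ω_{μl}, y_{μl}, V_{μl}) + (ω_{μl} − N^{-1/2} Σ_j r_{μj} a_{jl})/D_{μl} = 0; (iii) Σ_{il}^{-1} = −N^{-1} Σ_μ [∂_ω g_out(ω_{μl},y_{μl},V_{μl}) (r_{μi}² + s_{μi}) + g_out(ω_{μl},y_{μl},V_{μl})²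 s_{μi}] and T_{il} = Σ_{il} [N^{-1/2} Σ_μ g_out(ω_{μl},y_{μl},V_{μl}) r_{μi} − a_{il} N^{-1} Σ_μ r_{μi}² ∂_ω g_out(ω_{μl},y_{μl},V_{μl}) − a_{il} N^{-1} Σ_μ s_{μi} g_out(ω_{μl},y_{μl},V_{μl})²]; (iv) Z_{μi}^{-1} = −N^{-1} Σ_l [∂_ω g_out(ω_{μl},y_{μl},V_{μl}) (a_{il}² + c_{il}) + g_out(ω_{μl},y_{μl},V_{μl})² c_{il}] and W_{μi} = Z_{μi} [N^{-1/2} Σ_l g_out(ω_{μl},y_{μl},V_{μl}) a_{il} − r_{μi} N^{-1} Σ_l a_{il}² ∂_ω g_out(ω_{μl},y_{μl},V_{μl}) − r_{μi} N^{-1} Σ_l c_{il} g_out(ω_{μl},y_{μl},V_{μl})²]. Then (T,Σ,W,Z,ω,a,c,r,s) is a stationary point of the fixed-point-generating Bethe free entropy Φ^Bethe_AMP: every partial derivative of Φ^Bethe_AMP with respect to each of the variables T_{il}, Σ_{il}, W_{μi}, Z_{μi}, ω_{μl}, a_{il}, c_{il}, r_{μi}, s_{μi} vanishes at this point. -/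

import Mathlib

open MeasureTheory

noncomputable section

/-- The tilted partition function `Ẑ_X(Σ,T) = ∫ e^{-(x-T)²/(2Σ)} dP_X(x)`. -/
def ZhatX (PX : Measure ℝ) (S T : ℝ) : ℝ :=
  ∫ x, Real.exp (-(x - T) ^ 2 / (2 * S)) ∂PX

/-- The input mean function `f_a(Σ,T)` associated with the prior `P_X`. -/
def fa (PX : Measure ℝ) (S T : ℝ) : ℝ :=
  (∫ x, x * Real.exp (-(x - T) ^ 2 / (2 * S)) ∂PX) / ZhatX PX S T

/-- The input variance function `f_c(Σ,T)` associated with the prior `P_X`. -/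
def fc (PX : Measure ℝ) (S T : ℝ) : ℝ :=
  (∫ x, x ^ 2 * Real.exp (-(x - T) ^ 2 / (2 * S)) ∂PX) / ZhatX PX S T - (fa PX S T) ^ 2

/-- The tilted partition function `Ẑ_F(Z,W) = ∫ e^{-(√N F − W)²/(2Z)} dP_F(F)`. -/
def ZhatF (PF : Measure ℝ) (N : ℕ) (Z W : ℝ) : ℝ :=
  ∫ F, Real.exp (-(Real.sqrt N * F - W) ^ 2 / (2 * Z)) ∂PF

/-- The input mean function `f_r(Z,W)` associated with the prior `P_F`. -/
def fr (PF : Measure ℝ) (N : ℕ) (Z W : ℝ) : ℝ :=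
  Real.sqrt N * (∫ F, F * Real.exp (-(Real.sqrt N * F - W) ^ 2 / (2 * Z)) ∂PF) /
    ZhatF PF N Z W

/-- The input variance function `f_s(Z,W)` associated with the prior `P_F`. -/
def fs (PF : Measure ℝ) (N : ℕ) (Z W : ℝ) : ℝ :=
  (N : ℝ) * (∫ F, F ^ 2 * Real.exp (-(Real.sqrt N * F - W) ^ 2 / (2 * Z)) ∂PF) /
    ZhatF PF N Z W - (fr PF N Z W) ^ 2

/-- The output function `g_out(ω, y, V)` of the output channel with density `p(y,z)`. -/
def gout (p : ℝ → ℝ → ℝ) (ω y V : ℝ) : ℝ :=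
  (∫ z, (z - ω) * p y z * Real.exp (-(z - ω) ^ 2 / (2 * V))) /
    (V * ∫ z, p y z * Real.exp (-(z - ω) ^ 2 / (2 * V)))

/-- The partial derivative `∂_ω g_out(ω, y, V)`. -/
def dgout (p : ℝ → ℝ → ℝ) (ω y V : ℝ) : ℝ :=
  deriv (fun w => gout p w y V) ω

/-- The local partition function `Z^{μl}(ω,V) = (2πV)^{-1/2} ∫ p(y,z) e^{-(z-ω)²/(2V)} dz`. -/
def Zout (p : ℝ → ℝ → ℝ) (y ω V : ℝ) : ℝ :=
  (Real.sqrt (2 * Real.pi * V))⁻¹ * ∫ z, p y z * Real.exp (-(z - ω) ^ 2 / (2 * V))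

/-- The variance estimate
`V_{μl}(a,c,r,s) = N^{-1} Σ_j (c_{jl} s_{μj} + c_{jl} r_{μj}² + a_{jl}² s_{μj})`. -/
def Vml {N M P : ℕ} (a c : Fin N → Fin P → ℝ) (r s : Fin M → Fin N → ℝ)
    (μ : Fin M) (l : Fin P) : ℝ :=
  (1 / (N : ℝ)) * ∑ j, (c j l * s μ j + c j l * (r μ j) ^ 2 + (a j l) ^ 2 * s μ j)

/-- The fixed-point-generating Bethe free entropy `Φ^Bethe_AMP(T,Σ,W,Z,ω,a,c,r,s)`. -/
def PhiBetheAMP (PX PF : Measure ℝ) (p : ℝ → ℝ → ℝ) (N M P : ℕ)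
    (y : Fin M → Fin P → ℝ)
    (T S : Fin N → Fin P → ℝ) (W Z : Fin M → Fin N → ℝ)
    (ω : Fin M → Fin P → ℝ)
    (a c : Fin N → Fin P → ℝ) (r s : Fin M → Fin N → ℝ) : ℝ :=
  (∑ i, ∑ l, (Real.log (ZhatX PX (S i l) (T i l))
      + (c i l + (a i l - T i l) ^ 2) / (2 * S i l)))
  + (∑ μ, ∑ i, (Real.log (ZhatF PF N (Z μ i) (W μ i))
      + (s μ i + (r μ i - W μ i) ^ 2) / (2 * Z μ i)))
  + (∑ μ, ∑ l, (Real.log (Zout p (y μ l) (ω μ l) (Vml a c r s μ l))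
      + (1 / 2) * (ω μ l - (Real.sqrt N)⁻¹ * ∑ i, r μ i * a i l) ^ 2
          / (Vml a c r s μ l - (1 / (N : ℝ)) * ∑ i, s μ i * c i l)))

/-- Update a single entry `(i,l)` of a matrix (seen as a function of two indices). -/
def upd {α β : Type*} [DecidableEq α] [DecidableEq β]
    (f : α → β → ℝ) (i : α) (l : β) (v : ℝ) : α → β → ℝ :=
  fun i' l' => if i' = i ∧ l' = l then v else f i' l'


section AuxLemmas

variable {α β : Type*} [DecidableEq α] [DecidableEq β]

lemma upd_self (f : α → β → ℝ) (i : α) (l : β) (v : ℝ) : upd f i l v i l = v := by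
  simp [upd]

lemma upd_ne (f : α → β → ℝ) {i i' : α} {l l' : β} (h : ¬(i' = i ∧ l' = l)) (v : ℝ) :
    upd f i l v i' l' = f i' l' := by simp [upd, h]

lemma upd_col_ne (f : α → β → ℝ) (i : α) {l l' : β} (h : l' ≠ l) (v : ℝ) (j : α) :
    upd f i l v j l' = f j l' := by simp [upd, h]

lemma upd_row_ne (f : α → β → ℝ) {i i' : α} (h : i' ≠ i) (l : β) (v : ℝ) (l' : β) :
    upd f i l v i' l' = f i' l' := by simp [upd, h]

lemma upd_idem (f : α → β → ℝ) (i : α) (l : β) : upd f i l (f i l) = f := by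
  funext a b
  by_cases h : a = i ∧ b = l
  · obtain ⟨rfl, rfl⟩ := h; simp [upd]
  · simp [upd, h]

lemma hasDerivAt_sum_sum {ι κ : Type*} [Fintype ι] [Fintype κ]
    (F : ι → κ → ℝ → ℝ) (d : ι → κ → ℝ) (x : ℝ)
    (h : ∀ i k, HasDerivAt (F i k) (d i k) x) :
    HasDerivAt (fun v => ∑ i, ∑ k, F i k v) (∑ i, ∑ k, d i k) x :=
  HasDerivAt.fun_sum fun i _ => HasDerivAt.fun_sum fun k _ => h i k

lemma sum_comb {ι : Type*} [Fintype ι] (f g : ι → ℝ) (b c : ℝ) :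
    ∑ x, (b * f x + c * g x) = b * ∑ x, f x + c * ∑ x, g x := by
  simp [Finset.sum_add_distrib, Finset.mul_sum]

lemma sum_scale {ι : Type*} [Fintype ι] (f : ι → ℝ) (b : ℝ) :
    ∑ x, b * f x = b * ∑ x, f x := (Finset.mul_sum _ _ _).symm

lemma hasDerivAt_cvt {f : ℝ → ℝ} {a b x : ℝ} (h : HasDerivAt f a x) (e : b = a) :
    HasDerivAt f b x := e ▸ h

lemma out_term_hasDerivAt (p : ℝ → ℝ → ℝ) (yv w : ℝ)
    (Vf U SC : ℝ → ℝ) (V' U' SC' x : ℝ)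
    (hVf : HasDerivAt Vf V' x) (hU : HasDerivAt U U' x) (hSC : HasDerivAt SC SC' x)
    (hDpos : 0 < Vf x - SC x)
    (hdV : HasDerivAt (fun v => Real.log (Zout p yv w v))
      ((1/2) * ((gout p w yv (Vf x))^2 + dgout p w yv (Vf x))) (Vf x)) :
    HasDerivAt (fun v => Real.log (Zout p yv w (Vf v)) + 1/2 * (U v)^2 / (Vf v - SC v))
      ((1/2) * ((gout p w yv (Vf x))^2 + dgout p w yv (Vf x)) * V'
        + (U x * U' * (Vf x - SC x) - (1/2) * (U x)^2 * (V' - SC')) / (Vf x - SC x)^2) x := by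
  have h1 : HasDerivAt (fun v => Real.log (Zout p yv w (Vf v)))
      ((1/2) * ((gout p w yv (Vf x))^2 + dgout p w yv (Vf x)) * V') x := by
    exact hdV.comp x hVf
  have hnum : HasDerivAt (fun v => 1/2 * (U v)^2) ((1/2 : ℝ) * (2 * U x ^ 1 * U')) x :=
    (hU.pow 2).const_mul (1/2)
  have hden : HasDerivAt (fun v => Vf v - SC v) (V' - SC') x := hVf.sub hSC
  have h2 := hnum.div hden (ne_of_gt hDpos)
  refine hasDerivAt_cvt (h1.add h2) ?_
  field_simp

end AuxLemmas

set_option maxHeartbeats 2000000 in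
/-- **Bethe/AMP correspondence.**  Any fixed point of the AMP equations for matrix
factorization is a stationary point of the fixed-point-generating Bethe free entropy
`Φ^Bethe_AMP`: every partial derivative of `Φ^Bethe_AMP` with respect to each of the
scalar variables `T_{il}, Σ_{il}, W_{μi}, Z_{μi}, ω_{μl}, a_{il}, c_{il}, r_{μi}, s_{μi}`
vanishes at the fixed point. -/
theorem amp_fixed_point_is_stationary_point_of_bethe_free_entropy
    (N M P : ℕ) (hN : 0 < N) (hM : 0 < M) (hP : 0 < P)
    (PX PF : Measure ℝ) [IsProbabilityMeasure PX] [IsProbabilityMeasure PF]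
    (p : ℝ → ℝ → ℝ) (hp : Measurable (Function.uncurry p)) (hpnn : ∀ y z, 0 ≤ p y z)
    (y : Fin M → Fin P → ℝ)
    (Tm Sm am cm : Fin N → Fin P → ℝ) (Wm Zm rm sm : Fin M → Fin N → ℝ)
    (om : Fin M → Fin P → ℝ)
    -- positivity/nonnegativity of the variance-like variables
    (hSm : ∀ i l, 0 < Sm i l) (hZm : ∀ μ i, 0 < Zm μ i)
    (hcm : ∀ i l, 0 ≤ cm i l) (hsm : ∀ μ i, 0 ≤ sm μ i)
    -- (i) input fixed-point equations
    (hfa : ∀ i l, am i l = fa PX (Sm i l) (Tm i l))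
    (hfc : ∀ i l, cm i l = fc PX (Sm i l) (Tm i l))
    (hfr : ∀ μ i, rm μ i = fr PF N (Zm μ i) (Wm μ i))
    (hfs : ∀ μ i, sm μ i = fs PF N (Zm μ i) (Wm μ i))
    -- (ii) positivity of D_{μl} and the ω fixed-point equation
    (hD : ∀ μ l, 0 < Vml am cm rm sm μ l - (1 / (N : ℝ)) * ∑ i, sm μ i * cm i l)
    (hom : ∀ μ l,
      gout p (om μ l) (y μ l) (Vml am cm rm sm μ l)
        + (om μ l - (Real.sqrt N)⁻¹ * ∑ i, rm μ i * am i l)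
            / (Vml am cm rm sm μ l - (1 / (N : ℝ)) * ∑ i, sm μ i * cm i l) = 0)
    -- (iii) fixed-point equations for Σ and T
    (hSinv : ∀ i l, (Sm i l)⁻¹ =
      -(1 / (N : ℝ)) * ∑ μ,
        (dgout p (om μ l) (y μ l) (Vml am cm rm sm μ l) * ((rm μ i) ^ 2 + sm μ i)
          + (gout p (om μ l) (y μ l) (Vml am cm rm sm μ l)) ^ 2 * sm μ i))
    (hTm : ∀ i l, Tm i l = Sm i l *
      ((Real.sqrt N)⁻¹ * (∑ μ, gout p (om μ l) (y μ l) (Vml am cm rm sm μ l) * rm μ i)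
        - am i l * ((1 / (N : ℝ)) *
            ∑ μ, (rm μ i) ^ 2 * dgout p (om μ l) (y μ l) (Vml am cm rm sm μ l))
        - am i l * ((1 / (N : ℝ)) *
            ∑ μ, sm μ i * (gout p (om μ l) (y μ l) (Vml am cm rm sm μ l)) ^ 2)))
    -- (iv) fixed-point equations for Z and W
    (hZinv : ∀ μ i, (Zm μ i)⁻¹ =
      -(1 / (N : ℝ)) * ∑ l,
        (dgout p (om μ l) (y μ l) (Vml am cm rm sm μ l) * ((am i l) ^ 2 + cm i l)
          + (gout p (om μ l) (y μ l) (Vml am cm rm sm μ l)) ^ 2 * cm i l))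
    (hWm : ∀ μ i, Wm μ i = Zm μ i *
      ((Real.sqrt N)⁻¹ * (∑ l, gout p (om μ l) (y μ l) (Vml am cm rm sm μ l) * am i l)
        - rm μ i * ((1 / (N : ℝ)) *
            ∑ l, (am i l) ^ 2 * dgout p (om μ l) (y μ l) (Vml am cm rm sm μ l))
        - rm μ i * ((1 / (N : ℝ)) *
            ∑ l, cm i l * (gout p (om μ l) (y μ l) (Vml am cm rm sm μ l)) ^ 2)))
    -- regularity of the local partition functions (differentiation under the integral)
    (hZout_pos : ∀ (yv w V : ℝ), 0 < V → 0 < Zout p yv w V)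
    (hZout_dω : ∀ (yv V : ℝ), 0 < V → ∀ w : ℝ,
      HasDerivAt (fun w' => Real.log (Zout p yv w' V)) (gout p w yv V) w)
    (hZout_dV : ∀ (yv w V : ℝ), 0 < V →
      HasDerivAt (fun v => Real.log (Zout p yv w v))
        ((1 / 2) * ((gout p w yv V) ^ 2 + dgout p w yv V)) V)
    (hgout_diff : ∀ (yv V : ℝ), 0 < V → ∀ w : ℝ,
      DifferentiableAt ℝ (fun w' => gout p w' yv V) w)
    (hZX_dT : ∀ (S T : ℝ), 0 < S →
      HasDerivAt (fun t => Real.log (ZhatX PX S t)) ((fa PX S T - T) / S) T)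
    (hZX_dS : ∀ (S T : ℝ), 0 < S →
      HasDerivAt (fun s => Real.log (ZhatX PX s T))
        ((fc PX S T + (fa PX S T - T) ^ 2) / (2 * S ^ 2)) S)
    (hZF_dW : ∀ (Z W : ℝ), 0 < Z →
      HasDerivAt (fun w => Real.log (ZhatF PF N Z w)) ((fr PF N Z W - W) / Z) W)
    (hZF_dZ : ∀ (Z W : ℝ), 0 < Z →
      HasDerivAt (fun z => Real.log (ZhatF PF N z W))
        ((fs PF N Z W + (fr PF N Z W - W) ^ 2) / (2 * Z ^ 2)) Z) :
    -- conclusion: all partial derivatives of Φ^Bethe_AMP vanish at the fixed point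
    (∀ i l, HasDerivAt
      (fun v => PhiBetheAMP PX PF p N M P y (upd Tm i l v) Sm Wm Zm om am cm rm sm)
      0 (Tm i l)) ∧
    (∀ i l, HasDerivAt
      (fun v => PhiBetheAMP PX PF p N M P y Tm (upd Sm i l v) Wm Zm om am cm rm sm)
      0 (Sm i l)) ∧
    (∀ μ i, HasDerivAt
      (fun v => PhiBetheAMP PX PF p N M P y Tm Sm (upd Wm μ i v) Zm om am cm rm sm)
      0 (Wm μ i)) ∧
    (∀ μ i, HasDerivAt
      (fun v => PhiBetheAMP PX PF p N M P y Tm Sm Wm (upd Zm μ i v) om am cm rm sm)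
      0 (Zm μ i)) ∧
    (∀ μ l, HasDerivAt
      (fun v => PhiBetheAMP PX PF p N M P y Tm Sm Wm Zm (upd om μ l v) am cm rm sm)
      0 (om μ l)) ∧
    (∀ i l, HasDerivAt
      (fun v => PhiBetheAMP PX PF p N M P y Tm Sm Wm Zm om (upd am i l v) cm rm sm)
      0 (am i l)) ∧
    (∀ i l, HasDerivAt
      (fun v => PhiBetheAMP PX PF p N M P y Tm Sm Wm Zm om am (upd cm i l v) rm sm)
      0 (cm i l)) ∧
    (∀ μ i, HasDerivAt
      (fun v => PhiBetheAMP PX PF p N M P y Tm Sm Wm Zm om am cm (upd rm μ i v) sm)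
      0 (rm μ i)) ∧
    (∀ μ i, HasDerivAt
      (fun v => PhiBetheAMP PX PF p N M P y Tm Sm Wm Zm om am cm rm (upd sm μ i v))
      0 (sm μ i)) := by
  have hNR : (0:ℝ) < (N:ℝ) := by exact_mod_cast hN
  have hNne : (N:ℝ) ≠ 0 := hNR.ne'
  have hsqN : Real.sqrt N ≠ 0 := (Real.sqrt_pos.mpr hNR).ne'
  have hVpos : ∀ μ l, 0 < Vml am cm rm sm μ l := by
    intro μ l
    have h := hD μ l
    have hsc : 0 ≤ (1 / (N : ℝ)) * ∑ i, sm μ i * cm i l :=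
      mul_nonneg (by positivity)
        (Finset.sum_nonneg fun j _ => mul_nonneg (hsm μ j) (hcm j l))
    linarith
  have hu : ∀ μ l, om μ l - (Real.sqrt N)⁻¹ * ∑ i, rm μ i * am i l
      = -(gout p (om μ l) (y μ l) (Vml am cm rm sm μ l))
        * (Vml am cm rm sm μ l - (1 / (N : ℝ)) * ∑ i, sm μ i * cm i l) := by
    intro μ l
    have h := hom μ l
    have hD' : (Vml am cm rm sm μ l - (1 / (N : ℝ)) * ∑ i, sm μ i * cm i l) ≠ 0 :=
      (hD μ l).ne'
    have h2 : (om μ l - (Real.sqrt N)⁻¹ * ∑ i, rm μ i * am i l) /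
        (Vml am cm rm sm μ l - (1 / (N : ℝ)) * ∑ i, sm μ i * cm i l)
        = -(gout p (om μ l) (y μ l) (Vml am cm rm sm μ l)) := by linarith
    rw [div_eq_iff hD'] at h2
    exact h2
  refine ⟨?_, ?_, ?_, ?_, ?_, ?_, ?_, ?_, ?_⟩
  · -- T derivative
    intro i l
    simp only [PhiBetheAMP]
    have h1 : HasDerivAt (fun v => ∑ i', ∑ l',
        (Real.log (ZhatX PX (Sm i' l') (upd Tm i l v i' l'))
          + (cm i' l' + (am i' l' - upd Tm i l v i' l') ^ 2) / (2 * Sm i' l')))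
        (∑ i' : Fin N, ∑ l' : Fin P, (0:ℝ)) (Tm i l) := by
      apply hasDerivAt_sum_sum
      intro i' l'
      by_cases h : i' = i ∧ l' = l
      · obtain ⟨rfl, rfl⟩ := h
        simp only [upd_self]
        have hA := hZX_dT (Sm i' l') (Tm i' l') (hSm i' l')
        have hB := ((((hasDerivAt_id (Tm i' l')).const_sub (am i' l')).pow 2).const_add
          (cm i' l')).div_const (2 * Sm i' l')
        refine hasDerivAt_cvt (hA.add hB) ?_
        rw [← hfa i' l']
        have hS := (hSm i' l').ne'
        simp only [id_eq]
        field_simp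
        ring
      · simp only [upd_ne _ h]
        exact hasDerivAt_const _ _
    have h1' : HasDerivAt (fun v => ∑ i', ∑ l',
        (Real.log (ZhatX PX (Sm i' l') (upd Tm i l v i' l'))
          + (cm i' l' + (am i' l' - upd Tm i l v i' l') ^ 2) / (2 * Sm i' l')))
        0 (Tm i l) := by simpa using h1
    exact (h1'.add_const _).add_const _
  · -- S derivative
    intro i l
    simp only [PhiBetheAMP]
    have h1 : HasDerivAt (fun v => ∑ i', ∑ l',
        (Real.log (ZhatX PX (upd Sm i l v i' l') (Tm i' l'))
          + (cm i' l' + (am i' l' - Tm i' l') ^ 2) / (2 * upd Sm i l v i' l')))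
        (∑ i' : Fin N, ∑ l' : Fin P, (0:ℝ)) (Sm i l) := by
      apply hasDerivAt_sum_sum
      intro i' l'
      by_cases h : i' = i ∧ l' = l
      · obtain ⟨rfl, rfl⟩ := h
        simp only [upd_self]
        have hA := hZX_dS (Sm i' l') (Tm i' l') (hSm i' l')
        have hB := (hasDerivAt_const (Sm i' l') (cm i' l' + (am i' l' - Tm i' l') ^ 2)).div
          ((hasDerivAt_id (Sm i' l')).const_mul 2)
          (by show (2:ℝ) * Sm i' l' ≠ 0; exact (mul_pos two_pos (hSm i' l')).ne')
        refine hasDerivAt_cvt (hA.add hB) ?_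
        rw [← hfa i' l', ← hfc i' l']
        have hS := (hSm i' l').ne'
        simp only [id_eq]
        field_simp
        ring
      · simp only [upd_ne _ h]
        exact hasDerivAt_const _ _
    have h1' : HasDerivAt (fun v => ∑ i', ∑ l',
        (Real.log (ZhatX PX (upd Sm i l v i' l') (Tm i' l'))
          + (cm i' l' + (am i' l' - Tm i' l') ^ 2) / (2 * upd Sm i l v i' l')))
        0 (Sm i l) := by simpa using h1
    exact (h1'.add_const _).add_const _
  · -- W derivative
    intro μ i
    simp only [PhiBetheAMP]
    have h1 : HasDerivAt (fun v => ∑ μ', ∑ i',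
        (Real.log (ZhatF PF N (Zm μ' i') (upd Wm μ i v μ' i'))
          + (sm μ' i' + (rm μ' i' - upd Wm μ i v μ' i') ^ 2) / (2 * Zm μ' i')))
        (∑ μ' : Fin M, ∑ i' : Fin N, (0:ℝ)) (Wm μ i) := by
      apply hasDerivAt_sum_sum
      intro μ' i'
      by_cases h : μ' = μ ∧ i' = i
      · obtain ⟨rfl, rfl⟩ := h
        simp only [upd_self]
        have hA := hZF_dW (Zm μ' i') (Wm μ' i') (hZm μ' i')
        have hB := ((((hasDerivAt_id (Wm μ' i')).const_sub (rm μ' i')).pow 2).const_add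
          (sm μ' i')).div_const (2 * Zm μ' i')
        refine hasDerivAt_cvt (hA.add hB) ?_
        rw [← hfr μ' i']
        have hZ := (hZm μ' i').ne'
        simp only [id_eq]
        field_simp
        ring
      · simp only [upd_ne _ h]
        exact hasDerivAt_const _ _
    have h1' : HasDerivAt (fun v => ∑ μ', ∑ i',
        (Real.log (ZhatF PF N (Zm μ' i') (upd Wm μ i v μ' i'))
          + (sm μ' i' + (rm μ' i' - upd Wm μ i v μ' i') ^ 2) / (2 * Zm μ' i')))
        0 (Wm μ i) := by simpa using h1
    exact (h1'.const_add _).add_const _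
  · -- Z derivative
    intro μ i
    simp only [PhiBetheAMP]
    have h1 : HasDerivAt (fun v => ∑ μ', ∑ i',
        (Real.log (ZhatF PF N (upd Zm μ i v μ' i') (Wm μ' i'))
          + (sm μ' i' + (rm μ' i' - Wm μ' i') ^ 2) / (2 * upd Zm μ i v μ' i')))
        (∑ μ' : Fin M, ∑ i' : Fin N, (0:ℝ)) (Zm μ i) := by
      apply hasDerivAt_sum_sum
      intro μ' i'
      by_cases h : μ' = μ ∧ i' = i
      · obtain ⟨rfl, rfl⟩ := h
        simp only [upd_self]
        have hA := hZF_dZ (Zm μ' i') (Wm μ' i') (hZm μ' i')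
        have hB := (hasDerivAt_const (Zm μ' i') (sm μ' i' + (rm μ' i' - Wm μ' i') ^ 2)).div
          ((hasDerivAt_id (Zm μ' i')).const_mul 2)
          (by show (2:ℝ) * Zm μ' i' ≠ 0; exact (mul_pos two_pos (hZm μ' i')).ne')
        refine hasDerivAt_cvt (hA.add hB) ?_
        rw [← hfr μ' i', ← hfs μ' i']
        have hZ := (hZm μ' i').ne'
        simp only [id_eq]
        field_simp
        ring
      · simp only [upd_ne _ h]
        exact hasDerivAt_const _ _
    have h1' : HasDerivAt (fun v => ∑ μ', ∑ i',
        (Real.log (ZhatF PF N (upd Zm μ i v μ' i') (Wm μ' i'))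
          + (sm μ' i' + (rm μ' i' - Wm μ' i') ^ 2) / (2 * upd Zm μ i v μ' i')))
        0 (Zm μ i) := by simpa using h1
    exact (h1'.const_add _).add_const _
  · -- ω derivative
    intro μ l
    simp only [PhiBetheAMP]
    have h1 : HasDerivAt (fun v => ∑ μ', ∑ l',
        (Real.log (Zout p (y μ' l') (upd om μ l v μ' l') (Vml am cm rm sm μ' l'))
          + 1 / 2 * (upd om μ l v μ' l' - (Real.sqrt N)⁻¹ * ∑ i', rm μ' i' * am i' l') ^ 2
            / (Vml am cm rm sm μ' l' - 1 / (N:ℝ) * ∑ i', sm μ' i' * cm i' l')))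
        (∑ μ' : Fin M, ∑ l' : Fin P, (0:ℝ)) (om μ l) := by
      apply hasDerivAt_sum_sum
      intro μ' l'
      by_cases h : μ' = μ ∧ l' = l
      · obtain ⟨rfl, rfl⟩ := h
        simp only [upd_self]
        have hA := hZout_dω (y μ' l') (Vml am cm rm sm μ' l') (hVpos μ' l') (om μ' l')
        have hB := ((((hasDerivAt_id (om μ' l')).sub_const
            ((Real.sqrt N)⁻¹ * ∑ i', rm μ' i' * am i' l')).pow 2).const_mul (1/2)).div_const
          (Vml am cm rm sm μ' l' - 1 / (N:ℝ) * ∑ i', sm μ' i' * cm i' l')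
        refine hasDerivAt_cvt (hA.add hB) ?_
        have h0 := hom μ' l'
        simp only [id_eq]
        push_cast
        ring_nf
        ring_nf at h0
        linarith
      · simp only [upd_ne _ h]
        exact hasDerivAt_const _ _
    have h1' : HasDerivAt (fun v => ∑ μ', ∑ l',
        (Real.log (Zout p (y μ' l') (upd om μ l v μ' l') (Vml am cm rm sm μ' l'))
          + 1 / 2 * (upd om μ l v μ' l' - (Real.sqrt N)⁻¹ * ∑ i', rm μ' i' * am i' l') ^ 2
            / (Vml am cm rm sm μ' l' - 1 / (N:ℝ) * ∑ i', sm μ' i' * cm i' l')))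
        0 (om μ l) := by simpa using h1
    exact h1'.const_add _
  · -- a derivative
    intro i l
    simp only [PhiBetheAMP]
    have h1 : HasDerivAt (fun v => ∑ i', ∑ l',
        (Real.log (ZhatX PX (Sm i' l') (Tm i' l'))
          + (cm i' l' + (upd am i l v i' l' - Tm i' l') ^ 2) / (2 * Sm i' l')))
        (∑ i', ∑ l', (if i' = i ∧ l' = l then (am i l - Tm i l) / Sm i l else 0))
        (am i l) := by
      apply hasDerivAt_sum_sum
      intro i' l'
      by_cases h : i' = i ∧ l' = l
      · obtain ⟨rfl, rfl⟩ := h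
        rw [if_pos ⟨rfl, rfl⟩]
        simp only [upd_self]
        have hB := (((((hasDerivAt_id (am i' l')).sub_const (Tm i' l')).pow 2).const_add
          (cm i' l')).div_const (2 * Sm i' l')).const_add
          (Real.log (ZhatX PX (Sm i' l') (Tm i' l')))
        refine hasDerivAt_cvt (hB) ?_
        have hS := (hSm i' l').ne'
        simp only [id_eq]
        field_simp
        ring
      · rw [if_neg h]
        simp only [upd_ne _ h]
        exact hasDerivAt_const _ _
    have h3 : HasDerivAt (fun v => ∑ μ', ∑ l',
        (Real.log (Zout p (y μ' l') (om μ' l') (Vml (upd am i l v) cm rm sm μ' l'))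
          + 1 / 2 * (om μ' l' - (Real.sqrt N)⁻¹ * ∑ i', rm μ' i' * upd am i l v i' l') ^ 2
            / (Vml (upd am i l v) cm rm sm μ' l' - 1 / (N:ℝ) * ∑ i', sm μ' i' * cm i' l')))
        (∑ μ', ∑ l', (if l' = l then
            am i l / (N:ℝ) * (sm μ' i * dgout p (om μ' l) (y μ' l) (Vml am cm rm sm μ' l))
            + (Real.sqrt N)⁻¹ * (gout p (om μ' l) (y μ' l) (Vml am cm rm sm μ' l) * rm μ' i)
          else 0)) (am i l) := by
      apply hasDerivAt_sum_sum
      intro μ' l'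
      by_cases hl : l' = l
      · subst hl
        rw [if_pos rfl]
        have hVf : HasDerivAt (fun v => Vml (upd am i l' v) cm rm sm μ' l')
            (2 * am i l' * sm μ' i / (N:ℝ)) (am i l') := by
          simp only [Vml]
          have hs : HasDerivAt (fun v => ∑ j,
              (cm j l' * sm μ' j + cm j l' * rm μ' j ^ 2 + (upd am i l' v j l') ^ 2 * sm μ' j))
              (∑ j, (if j = i then 2 * am i l' * sm μ' i else 0)) (am i l') := by
            apply HasDerivAt.fun_sum
            intro j _
            by_cases hj : j = i
            · subst hj
              rw [if_pos rfl]
              simp only [upd_self]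
              have hB := (((hasDerivAt_id (am j l')).pow 2).mul_const (sm μ' j)).const_add
                (cm j l' * sm μ' j + cm j l' * rm μ' j ^ 2)
              refine hasDerivAt_cvt (hB) ?_
              simp only [id_eq, pow_one]
              push_cast
              ring
            · rw [if_neg hj]
              simp only [upd_row_ne am hj]
              exact hasDerivAt_const _ _
          have h2 := hs.const_mul (1 / (N:ℝ))
          refine hasDerivAt_cvt (h2) ?_
          rw [Finset.sum_ite_eq' Finset.univ i (fun _ => 2 * am i l' * sm μ' i)]
          simp
          ring
        have hU : HasDerivAt
            (fun v => om μ' l' - (Real.sqrt N)⁻¹ * ∑ i', rm μ' i' * upd am i l' v i' l')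
            (-((Real.sqrt N)⁻¹ * rm μ' i)) (am i l') := by
          have hs : HasDerivAt (fun v => ∑ i', rm μ' i' * upd am i l' v i' l')
              (∑ i', (if i' = i then rm μ' i else 0)) (am i l') := by
            apply HasDerivAt.fun_sum
            intro j _
            by_cases hj : j = i
            · subst hj
              rw [if_pos rfl]
              simp only [upd_self]
              simpa using (hasDerivAt_id (am j l')).const_mul (rm μ' j)
            · rw [if_neg hj]
              simp only [upd_row_ne am hj]
              exact hasDerivAt_const _ _
          have h2 := (hs.const_mul ((Real.sqrt N)⁻¹)).const_sub (om μ' l')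
          refine hasDerivAt_cvt (h2) ?_
          rw [Finset.sum_ite_eq' Finset.univ i (fun _ => rm μ' i)]
          simp
        have H := out_term_hasDerivAt p (y μ' l') (om μ' l')
          (fun v => Vml (upd am i l' v) cm rm sm μ' l')
          (fun v => om μ' l' - (Real.sqrt N)⁻¹ * ∑ i', rm μ' i' * upd am i l' v i' l')
          (fun _ => 1 / (N:ℝ) * ∑ i', sm μ' i' * cm i' l')
          _ _ 0 (am i l') hVf hU (hasDerivAt_const _ _)
          (by simp only [upd_idem]; exact hD μ' l')
          (by simp only [upd_idem]
              exact hZout_dV (y μ' l') (om μ' l') _ (hVpos μ' l'))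
        refine hasDerivAt_cvt (H) ?_
        simp only [upd_idem]
        rw [hu μ' l']
        set DD := Vml am cm rm sm μ' l' - 1 / (N:ℝ) * ∑ x, sm μ' x * cm x l' with hDD
        have hD' : DD ≠ 0 := by rw [hDD]; exact (hD μ' l').ne'
        field_simp
        ring
      · rw [if_neg hl]
        simp only [Vml, upd_col_ne am i hl]
        exact hasDerivAt_const _ _
    rw [show (∑ i', ∑ l', (if i' = i ∧ l' = l then (am i l - Tm i l) / Sm i l else 0))
        = (am i l - Tm i l) / Sm i l from by simp [ite_and, Finset.sum_ite_eq']] at h1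
    rw [show (∑ μ' : Fin M, ∑ l', (if l' = l then
            am i l / (N:ℝ) * (sm μ' i * dgout p (om μ' l) (y μ' l) (Vml am cm rm sm μ' l))
            + (Real.sqrt N)⁻¹ * (gout p (om μ' l) (y μ' l) (Vml am cm rm sm μ' l) * rm μ' i)
          else 0))
        = ∑ μ' : Fin M,
            (am i l / (N:ℝ) * (sm μ' i * dgout p (om μ' l) (y μ' l) (Vml am cm rm sm μ' l))
            + (Real.sqrt N)⁻¹ * (gout p (om μ' l) (y μ' l) (Vml am cm rm sm μ' l) * rm μ' i))
        from by simp [Finset.sum_ite_eq']] at h3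
    have H := (h1.add_const (∑ μ', ∑ i', (Real.log (ZhatF PF N (Zm μ' i') (Wm μ' i'))
      + (sm μ' i' + (rm μ' i' - Wm μ' i') ^ 2) / (2 * Zm μ' i')))).add h3
    have hzero : (am i l - Tm i l) / Sm i l
        + (∑ μ' : Fin M,
            (am i l / (N:ℝ) * (sm μ' i * dgout p (om μ' l) (y μ' l) (Vml am cm rm sm μ' l))
            + (Real.sqrt N)⁻¹ * (gout p (om μ' l) (y μ' l) (Vml am cm rm sm μ' l) * rm μ' i)))
        = 0 := by
      rw [sum_comb (fun μ' => sm μ' i * dgout p (om μ' l) (y μ' l) (Vml am cm rm sm μ' l))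
        (fun μ' => gout p (om μ' l) (y μ' l) (Vml am cm rm sm μ' l) * rm μ' i)
        (am i l / (N:ℝ)) ((Real.sqrt N)⁻¹)]
      have hS1 := hSinv i l
      rw [show (∑ μ', (dgout p (om μ' l) (y μ' l) (Vml am cm rm sm μ' l) * (rm μ' i ^ 2 + sm μ' i)
            + gout p (om μ' l) (y μ' l) (Vml am cm rm sm μ' l) ^ 2 * sm μ' i))
          = (∑ μ', rm μ' i ^ 2 * dgout p (om μ' l) (y μ' l) (Vml am cm rm sm μ' l))
            + (∑ μ', sm μ' i * dgout p (om μ' l) (y μ' l) (Vml am cm rm sm μ' l))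
            + (∑ μ', sm μ' i * gout p (om μ' l) (y μ' l) (Vml am cm rm sm μ' l) ^ 2)
          from by
            rw [← Finset.sum_add_distrib, ← Finset.sum_add_distrib]
            exact Finset.sum_congr rfl fun μ' _ => by ring] at hS1
      have hSne := (hSm i l).ne'
      rw [hTm i l, sub_div, mul_div_cancel_left₀ _ hSne, div_eq_mul_inv, hS1]
      ring
    rw [hzero] at H
    exact H

  · -- c derivative
    intro i l
    simp only [PhiBetheAMP]
    have h1 : HasDerivAt (fun v => ∑ i', ∑ l',
        (Real.log (ZhatX PX (Sm i' l') (Tm i' l'))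
          + (upd cm i l v i' l' + (am i' l' - Tm i' l') ^ 2) / (2 * Sm i' l')))
        (∑ i', ∑ l', (if i' = i ∧ l' = l then 1 / (2 * Sm i l) else 0)) (cm i l) := by
      apply hasDerivAt_sum_sum
      intro i' l'
      by_cases h : i' = i ∧ l' = l
      · obtain ⟨rfl, rfl⟩ := h
        rw [if_pos ⟨rfl, rfl⟩]
        simp only [upd_self]
        exact (((hasDerivAt_id (cm i' l')).add_const ((am i' l' - Tm i' l') ^ 2)).div_const
          (2 * Sm i' l')).const_add (Real.log (ZhatX PX (Sm i' l') (Tm i' l')))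
      · rw [if_neg h]
        simp only [upd_ne _ h]
        exact hasDerivAt_const _ _
    have h3 : HasDerivAt (fun v => ∑ μ', ∑ l',
        (Real.log (Zout p (y μ' l') (om μ' l') (Vml am (upd cm i l v) rm sm μ' l'))
          + 1 / 2 * (om μ' l' - (Real.sqrt N)⁻¹ * ∑ i', rm μ' i' * am i' l') ^ 2
            / (Vml am (upd cm i l v) rm sm μ' l'
                - 1 / (N:ℝ) * ∑ i', sm μ' i' * upd cm i l v i' l')))
        (∑ μ', ∑ l', (if l' = l then
            1 / (2 * (N:ℝ)) * (dgout p (om μ' l) (y μ' l) (Vml am cm rm sm μ' l)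
                * (rm μ' i ^ 2 + sm μ' i)
              + gout p (om μ' l) (y μ' l) (Vml am cm rm sm μ' l) ^ 2 * sm μ' i)
          else 0)) (cm i l) := by
      apply hasDerivAt_sum_sum
      intro μ' l'
      by_cases hl : l' = l
      · subst hl
        rw [if_pos rfl]
        have hVf : HasDerivAt (fun v => Vml am (upd cm i l' v) rm sm μ' l')
            ((sm μ' i + rm μ' i ^ 2) / (N:ℝ)) (cm i l') := by
          simp only [Vml]
          have hs : HasDerivAt (fun v => ∑ j,
              (upd cm i l' v j l' * sm μ' j + upd cm i l' v j l' * rm μ' j ^ 2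
                + am j l' ^ 2 * sm μ' j))
              (∑ j, (if j = i then sm μ' i + rm μ' i ^ 2 else 0)) (cm i l') := by
            apply HasDerivAt.fun_sum
            intro j _
            by_cases hj : j = i
            · subst hj
              rw [if_pos rfl]
              simp only [upd_self]
              have hB := (((hasDerivAt_id (cm j l')).mul_const (sm μ' j)).add
                ((hasDerivAt_id (cm j l')).mul_const (rm μ' j ^ 2))).add_const
                (am j l' ^ 2 * sm μ' j)
              refine hasDerivAt_cvt (hB) ?_
              ring
            · rw [if_neg hj]
              simp only [upd_row_ne cm hj]
              exact hasDerivAt_const _ _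
          have h2 := hs.const_mul (1 / (N:ℝ))
          refine hasDerivAt_cvt (h2) ?_
          rw [Finset.sum_ite_eq' Finset.univ i (fun _ => sm μ' i + rm μ' i ^ 2)]
          simp
          ring
        have hSC : HasDerivAt (fun v => 1 / (N:ℝ) * ∑ i', sm μ' i' * upd cm i l' v i' l')
            (sm μ' i / (N:ℝ)) (cm i l') := by
          have hs : HasDerivAt (fun v => ∑ i', sm μ' i' * upd cm i l' v i' l')
              (∑ i', (if i' = i then sm μ' i else 0)) (cm i l') := by
            apply HasDerivAt.fun_sum
            intro j _
            by_cases hj : j = i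
            · subst hj
              rw [if_pos rfl]
              simp only [upd_self]
              simpa using (hasDerivAt_id (cm j l')).const_mul (sm μ' j)
            · rw [if_neg hj]
              simp only [upd_row_ne cm hj]
              exact hasDerivAt_const _ _
          have h2 := hs.const_mul (1 / (N:ℝ))
          refine hasDerivAt_cvt (h2) ?_
          rw [Finset.sum_ite_eq' Finset.univ i (fun _ => sm μ' i)]
          simp
          ring
        have H := out_term_hasDerivAt p (y μ' l') (om μ' l')
          (fun v => Vml am (upd cm i l' v) rm sm μ' l')
          (fun _ => om μ' l' - (Real.sqrt N)⁻¹ * ∑ i', rm μ' i' * am i' l')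
          (fun v => 1 / (N:ℝ) * ∑ i', sm μ' i' * upd cm i l' v i' l')
          _ 0 _ (cm i l') hVf (hasDerivAt_const _ _) hSC
          (by simp only [upd_idem]; exact hD μ' l')
          (by simp only [upd_idem]
              exact hZout_dV (y μ' l') (om μ' l') _ (hVpos μ' l'))
        refine hasDerivAt_cvt (H) ?_
        simp only [upd_idem]
        rw [hu μ' l']
        set DD := Vml am cm rm sm μ' l' - 1 / (N:ℝ) * ∑ x, sm μ' x * cm x l' with hDD
        have hD' : DD ≠ 0 := by rw [hDD]; exact (hD μ' l').ne'
        field_simp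
        ring
      · rw [if_neg hl]
        simp only [Vml, upd_col_ne cm i hl]
        exact hasDerivAt_const _ _
    rw [show (∑ i', ∑ l', (if i' = i ∧ l' = l then 1 / (2 * Sm i l) else 0))
        = 1 / (2 * Sm i l) from by simp [ite_and, Finset.sum_ite_eq']] at h1
    rw [show (∑ μ' : Fin M, ∑ l', (if l' = l then
            1 / (2 * (N:ℝ)) * (dgout p (om μ' l) (y μ' l) (Vml am cm rm sm μ' l)
                * (rm μ' i ^ 2 + sm μ' i)
              + gout p (om μ' l) (y μ' l) (Vml am cm rm sm μ' l) ^ 2 * sm μ' i)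
          else 0))
        = ∑ μ' : Fin M, (1 / (2 * (N:ℝ))
            * (dgout p (om μ' l) (y μ' l) (Vml am cm rm sm μ' l) * (rm μ' i ^ 2 + sm μ' i)
              + gout p (om μ' l) (y μ' l) (Vml am cm rm sm μ' l) ^ 2 * sm μ' i))
        from by simp [Finset.sum_ite_eq']] at h3
    have H := (h1.add_const (∑ μ', ∑ i', (Real.log (ZhatF PF N (Zm μ' i') (Wm μ' i'))
      + (sm μ' i' + (rm μ' i' - Wm μ' i') ^ 2) / (2 * Zm μ' i')))).add h3
    have hzero : 1 / (2 * Sm i l)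
        + (∑ μ' : Fin M, (1 / (2 * (N:ℝ))
            * (dgout p (om μ' l) (y μ' l) (Vml am cm rm sm μ' l) * (rm μ' i ^ 2 + sm μ' i)
              + gout p (om μ' l) (y μ' l) (Vml am cm rm sm μ' l) ^ 2 * sm μ' i))) = 0 := by
      rw [sum_scale]
      have hS1 := hSinv i l
      have h2 : (∑ μ', (dgout p (om μ' l) (y μ' l) (Vml am cm rm sm μ' l)
            * (rm μ' i ^ 2 + sm μ' i)
          + gout p (om μ' l) (y μ' l) (Vml am cm rm sm μ' l) ^ 2 * sm μ' i))
          = -((N:ℝ) * (Sm i l)⁻¹) := by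
        rw [hS1]
        field_simp
      rw [h2]
      have hSne := (hSm i l).ne'
      field_simp
      ring
    rw [hzero] at H
    exact H
  · -- r derivative
    intro μ i
    simp only [PhiBetheAMP]
    have h2 : HasDerivAt (fun v => ∑ μ', ∑ i',
        (Real.log (ZhatF PF N (Zm μ' i') (Wm μ' i'))
          + (sm μ' i' + (upd rm μ i v μ' i' - Wm μ' i') ^ 2) / (2 * Zm μ' i')))
        (∑ μ', ∑ i', (if μ' = μ ∧ i' = i then (rm μ i - Wm μ i) / Zm μ i else 0))
        (rm μ i) := by
      apply hasDerivAt_sum_sum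
      intro μ' i'
      by_cases h : μ' = μ ∧ i' = i
      · obtain ⟨rfl, rfl⟩ := h
        rw [if_pos ⟨rfl, rfl⟩]
        simp only [upd_self]
        have hB := (((((hasDerivAt_id (rm μ' i')).sub_const (Wm μ' i')).pow 2).const_add
          (sm μ' i')).div_const (2 * Zm μ' i')).const_add
          (Real.log (ZhatF PF N (Zm μ' i') (Wm μ' i')))
        refine hasDerivAt_cvt (hB) ?_
        have hZ := (hZm μ' i').ne'
        simp only [id_eq]
        field_simp
        ring
      · rw [if_neg h]
        simp only [upd_ne _ h]
        exact hasDerivAt_const _ _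
    have h3 : HasDerivAt (fun v => ∑ μ', ∑ l',
        (Real.log (Zout p (y μ' l') (om μ' l') (Vml am cm (upd rm μ i v) sm μ' l'))
          + 1 / 2 * (om μ' l' - (Real.sqrt N)⁻¹ * ∑ i', upd rm μ i v μ' i' * am i' l') ^ 2
            / (Vml am cm (upd rm μ i v) sm μ' l' - 1 / (N:ℝ) * ∑ i', sm μ' i' * cm i' l')))
        (∑ μ', ∑ l', (if μ' = μ then
            rm μ i / (N:ℝ) * (cm i l' * dgout p (om μ l') (y μ l') (Vml am cm rm sm μ l'))
            + (Real.sqrt N)⁻¹ * (gout p (om μ l') (y μ l') (Vml am cm rm sm μ l') * am i l')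
          else 0)) (rm μ i) := by
      apply hasDerivAt_sum_sum
      intro μ' l'
      by_cases hm : μ' = μ
      · subst hm
        rw [if_pos rfl]
        have hVf : HasDerivAt (fun v => Vml am cm (upd rm μ' i v) sm μ' l')
            (2 * rm μ' i * cm i l' / (N:ℝ)) (rm μ' i) := by
          simp only [Vml]
          have hs : HasDerivAt (fun v => ∑ j,
              (cm j l' * sm μ' j + cm j l' * (upd rm μ' i v μ' j) ^ 2
                + am j l' ^ 2 * sm μ' j))
              (∑ j, (if j = i then 2 * rm μ' i * cm i l' else 0)) (rm μ' i) := by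
            apply HasDerivAt.fun_sum
            intro j _
            by_cases hj : j = i
            · subst hj
              rw [if_pos rfl]
              simp only [upd_self]
              have hB := ((((hasDerivAt_id (rm μ' j)).pow 2).const_mul (cm j l')).const_add
                (cm j l' * sm μ' j)).add_const (am j l' ^ 2 * sm μ' j)
              refine hasDerivAt_cvt (hB) ?_
              simp only [id_eq, pow_one]
              push_cast
              ring
            · rw [if_neg hj]
              simp only [upd_col_ne rm μ' hj]
              exact hasDerivAt_const _ _
          have h2 := hs.const_mul (1 / (N:ℝ))
          refine hasDerivAt_cvt (h2) ?_
          rw [Finset.sum_ite_eq' Finset.univ i (fun _ => 2 * rm μ' i * cm i l')]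
          simp
          ring
        have hU : HasDerivAt
            (fun v => om μ' l' - (Real.sqrt N)⁻¹ * ∑ i', upd rm μ' i v μ' i' * am i' l')
            (-((Real.sqrt N)⁻¹ * am i l')) (rm μ' i) := by
          have hs : HasDerivAt (fun v => ∑ i', upd rm μ' i v μ' i' * am i' l')
              (∑ i', (if i' = i then am i l' else 0)) (rm μ' i) := by
            apply HasDerivAt.fun_sum
            intro j _
            by_cases hj : j = i
            · subst hj
              rw [if_pos rfl]
              simp only [upd_self]
              simpa using (hasDerivAt_id (rm μ' j)).mul_const (am j l')
            · rw [if_neg hj]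
              simp only [upd_col_ne rm μ' hj]
              exact hasDerivAt_const _ _
          have h2 := (hs.const_mul ((Real.sqrt N)⁻¹)).const_sub (om μ' l')
          refine hasDerivAt_cvt (h2) ?_
          rw [Finset.sum_ite_eq' Finset.univ i (fun _ => am i l')]
          simp
        have H := out_term_hasDerivAt p (y μ' l') (om μ' l')
          (fun v => Vml am cm (upd rm μ' i v) sm μ' l')
          (fun v => om μ' l' - (Real.sqrt N)⁻¹ * ∑ i', upd rm μ' i v μ' i' * am i' l')
          (fun _ => 1 / (N:ℝ) * ∑ i', sm μ' i' * cm i' l')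
          _ _ 0 (rm μ' i) hVf hU (hasDerivAt_const _ _)
          (by simp only [upd_idem]; exact hD μ' l')
          (by simp only [upd_idem]
              exact hZout_dV (y μ' l') (om μ' l') _ (hVpos μ' l'))
        refine hasDerivAt_cvt (H) ?_
        simp only [upd_idem]
        rw [hu μ' l']
        set DD := Vml am cm rm sm μ' l' - 1 / (N:ℝ) * ∑ x, sm μ' x * cm x l' with hDD
        have hD' : DD ≠ 0 := by rw [hDD]; exact (hD μ' l').ne'
        field_simp
        ring
      · rw [if_neg hm]
        simp only [Vml, upd_row_ne rm hm]
        exact hasDerivAt_const _ _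
    rw [show (∑ μ', ∑ i', (if μ' = μ ∧ i' = i then (rm μ i - Wm μ i) / Zm μ i else 0))
        = (rm μ i - Wm μ i) / Zm μ i from by simp [ite_and, Finset.sum_ite_eq']] at h2
    rw [show (∑ μ' : Fin M, ∑ l' : Fin P, (if μ' = μ then
            rm μ i / (N:ℝ) * (cm i l' * dgout p (om μ l') (y μ l') (Vml am cm rm sm μ l'))
            + (Real.sqrt N)⁻¹ * (gout p (om μ l') (y μ l') (Vml am cm rm sm μ l') * am i l')
          else 0))
        = ∑ l' : Fin P,
            (rm μ i / (N:ℝ) * (cm i l' * dgout p (om μ l') (y μ l') (Vml am cm rm sm μ l'))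
            + (Real.sqrt N)⁻¹ * (gout p (om μ l') (y μ l') (Vml am cm rm sm μ l') * am i l'))
        from by rw [Finset.sum_comm]; simp [Finset.sum_ite_eq']] at h3
    have H := (h2.const_add (∑ i', ∑ l', (Real.log (ZhatX PX (Sm i' l') (Tm i' l'))
      + (cm i' l' + (am i' l' - Tm i' l') ^ 2) / (2 * Sm i' l')))).add h3
    have hzero : (rm μ i - Wm μ i) / Zm μ i
        + (∑ l' : Fin P,
            (rm μ i / (N:ℝ) * (cm i l' * dgout p (om μ l') (y μ l') (Vml am cm rm sm μ l'))
            + (Real.sqrt N)⁻¹ * (gout p (om μ l') (y μ l') (Vml am cm rm sm μ l') * am i l')))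
        = 0 := by
      rw [sum_comb (fun l' => cm i l' * dgout p (om μ l') (y μ l') (Vml am cm rm sm μ l'))
        (fun l' => gout p (om μ l') (y μ l') (Vml am cm rm sm μ l') * am i l')
        (rm μ i / (N:ℝ)) ((Real.sqrt N)⁻¹)]
      have hZ1 := hZinv μ i
      rw [show (∑ l', (dgout p (om μ l') (y μ l') (Vml am cm rm sm μ l')
            * (am i l' ^ 2 + cm i l')
            + gout p (om μ l') (y μ l') (Vml am cm rm sm μ l') ^ 2 * cm i l'))
          = (∑ l', am i l' ^ 2 * dgout p (om μ l') (y μ l') (Vml am cm rm sm μ l'))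
            + (∑ l', cm i l' * dgout p (om μ l') (y μ l') (Vml am cm rm sm μ l'))
            + (∑ l', cm i l' * gout p (om μ l') (y μ l') (Vml am cm rm sm μ l') ^ 2)
          from by
            rw [← Finset.sum_add_distrib, ← Finset.sum_add_distrib]
            exact Finset.sum_congr rfl fun l' _ => by ring] at hZ1
      have hZne := (hZm μ i).ne'
      rw [hWm μ i, sub_div, mul_div_cancel_left₀ _ hZne, div_eq_mul_inv, hZ1]
      ring
    rw [hzero] at H
    exact H
  · -- s derivative
    intro μ i
    simp only [PhiBetheAMP]
    have h2 : HasDerivAt (fun v => ∑ μ', ∑ i',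
        (Real.log (ZhatF PF N (Zm μ' i') (Wm μ' i'))
          + (upd sm μ i v μ' i' + (rm μ' i' - Wm μ' i') ^ 2) / (2 * Zm μ' i')))
        (∑ μ', ∑ i', (if μ' = μ ∧ i' = i then 1 / (2 * Zm μ i) else 0)) (sm μ i) := by
      apply hasDerivAt_sum_sum
      intro μ' i'
      by_cases h : μ' = μ ∧ i' = i
      · obtain ⟨rfl, rfl⟩ := h
        rw [if_pos ⟨rfl, rfl⟩]
        simp only [upd_self]
        exact (((hasDerivAt_id (sm μ' i')).add_const ((rm μ' i' - Wm μ' i') ^ 2)).div_const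
          (2 * Zm μ' i')).const_add (Real.log (ZhatF PF N (Zm μ' i') (Wm μ' i')))
      · rw [if_neg h]
        simp only [upd_ne _ h]
        exact hasDerivAt_const _ _
    have h3 : HasDerivAt (fun v => ∑ μ', ∑ l',
        (Real.log (Zout p (y μ' l') (om μ' l') (Vml am cm rm (upd sm μ i v) μ' l'))
          + 1 / 2 * (om μ' l' - (Real.sqrt N)⁻¹ * ∑ i', rm μ' i' * am i' l') ^ 2
            / (Vml am cm rm (upd sm μ i v) μ' l'
                - 1 / (N:ℝ) * ∑ i', upd sm μ i v μ' i' * cm i' l')))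
        (∑ μ', ∑ l', (if μ' = μ then
            1 / (2 * (N:ℝ)) * (dgout p (om μ l') (y μ l') (Vml am cm rm sm μ l')
                * (am i l' ^ 2 + cm i l')
              + gout p (om μ l') (y μ l') (Vml am cm rm sm μ l') ^ 2 * cm i l')
          else 0)) (sm μ i) := by
      apply hasDerivAt_sum_sum
      intro μ' l'
      by_cases hm : μ' = μ
      · subst hm
        rw [if_pos rfl]
        have hVf : HasDerivAt (fun v => Vml am cm rm (upd sm μ' i v) μ' l')
            ((cm i l' + am i l' ^ 2) / (N:ℝ)) (sm μ' i) := by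
          simp only [Vml]
          have hs : HasDerivAt (fun v => ∑ j,
              (cm j l' * upd sm μ' i v μ' j + cm j l' * rm μ' j ^ 2
                + am j l' ^ 2 * upd sm μ' i v μ' j))
              (∑ j, (if j = i then cm i l' + am i l' ^ 2 else 0)) (sm μ' i) := by
            apply HasDerivAt.fun_sum
            intro j _
            by_cases hj : j = i
            · subst hj
              rw [if_pos rfl]
              simp only [upd_self]
              have hB := ((((hasDerivAt_id (sm μ' j)).const_mul (cm j l')).add_const
                (cm j l' * rm μ' j ^ 2)).add ((hasDerivAt_id (sm μ' j)).const_mul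
                (am j l' ^ 2)))
              refine hasDerivAt_cvt (hB) ?_
              ring
            · rw [if_neg hj]
              simp only [upd_col_ne sm μ' hj]
              exact hasDerivAt_const _ _
          have h2 := hs.const_mul (1 / (N:ℝ))
          refine hasDerivAt_cvt (h2) ?_
          rw [Finset.sum_ite_eq' Finset.univ i (fun _ => cm i l' + am i l' ^ 2)]
          simp
          ring
        have hSC : HasDerivAt (fun v => 1 / (N:ℝ) * ∑ i', upd sm μ' i v μ' i' * cm i' l')
            (cm i l' / (N:ℝ)) (sm μ' i) := by
          have hs : HasDerivAt (fun v => ∑ i', upd sm μ' i v μ' i' * cm i' l')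
              (∑ i', (if i' = i then cm i l' else 0)) (sm μ' i) := by
            apply HasDerivAt.fun_sum
            intro j _
            by_cases hj : j = i
            · subst hj
              rw [if_pos rfl]
              simp only [upd_self]
              simpa using (hasDerivAt_id (sm μ' j)).mul_const (cm j l')
            · rw [if_neg hj]
              simp only [upd_col_ne sm μ' hj]
              exact hasDerivAt_const _ _
          have h2 := hs.const_mul (1 / (N:ℝ))
          refine hasDerivAt_cvt (h2) ?_
          rw [Finset.sum_ite_eq' Finset.univ i (fun _ => cm i l')]
          simp
          ring
        have H := out_term_hasDerivAt p (y μ' l') (om μ' l')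
          (fun v => Vml am cm rm (upd sm μ' i v) μ' l')
          (fun _ => om μ' l' - (Real.sqrt N)⁻¹ * ∑ i', rm μ' i' * am i' l')
          (fun v => 1 / (N:ℝ) * ∑ i', upd sm μ' i v μ' i' * cm i' l')
          _ 0 _ (sm μ' i) hVf (hasDerivAt_const _ _) hSC
          (by simp only [upd_idem]; exact hD μ' l')
          (by simp only [upd_idem]
              exact hZout_dV (y μ' l') (om μ' l') _ (hVpos μ' l'))
        refine hasDerivAt_cvt (H) ?_
        simp only [upd_idem]
        rw [hu μ' l']
        set DD := Vml am cm rm sm μ' l' - 1 / (N:ℝ) * ∑ x, sm μ' x * cm x l' with hDD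
        have hD' : DD ≠ 0 := by rw [hDD]; exact (hD μ' l').ne'
        field_simp
        ring
      · rw [if_neg hm]
        simp only [Vml, upd_row_ne sm hm]
        exact hasDerivAt_const _ _
    rw [show (∑ μ', ∑ i', (if μ' = μ ∧ i' = i then 1 / (2 * Zm μ i) else 0))
        = 1 / (2 * Zm μ i) from by simp [ite_and, Finset.sum_ite_eq']] at h2
    rw [show (∑ μ' : Fin M, ∑ l' : Fin P, (if μ' = μ then
            1 / (2 * (N:ℝ)) * (dgout p (om μ l') (y μ l') (Vml am cm rm sm μ l')
                * (am i l' ^ 2 + cm i l')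
              + gout p (om μ l') (y μ l') (Vml am cm rm sm μ l') ^ 2 * cm i l')
          else 0))
        = ∑ l' : Fin P, (1 / (2 * (N:ℝ))
            * (dgout p (om μ l') (y μ l') (Vml am cm rm sm μ l') * (am i l' ^ 2 + cm i l')
              + gout p (om μ l') (y μ l') (Vml am cm rm sm μ l') ^ 2 * cm i l'))
        from by rw [Finset.sum_comm]; simp [Finset.sum_ite_eq']] at h3
    have H := (h2.const_add (∑ i', ∑ l', (Real.log (ZhatX PX (Sm i' l') (Tm i' l'))
      + (cm i' l' + (am i' l' - Tm i' l') ^ 2) / (2 * Sm i' l')))).add h3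
    have hzero : 1 / (2 * Zm μ i)
        + (∑ l' : Fin P, (1 / (2 * (N:ℝ))
            * (dgout p (om μ l') (y μ l') (Vml am cm rm sm μ l') * (am i l' ^ 2 + cm i l')
              + gout p (om μ l') (y μ l') (Vml am cm rm sm μ l') ^ 2 * cm i l'))) = 0 := by
      rw [sum_scale]
      have hZ1 := hZinv μ i
      have h2 : (∑ l', (dgout p (om μ l') (y μ l') (Vml am cm rm sm μ l')
            * (am i l' ^ 2 + cm i l')
          + gout p (om μ l') (y μ l') (Vml am cm rm sm μ l') ^ 2 * cm i l'))
          = -((N:ℝ) * (Zm μ i)⁻¹) := by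
        rw [hZ1]
        field_simp
      rw [h2]
      have hZne := (hZm μ i).ne'
      field_simp
      ring
    rw [hzero] at H
    exact H



end
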